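/- Fix a nonzero query matrix Q ∈ ℝ^{d×m} and define, for nonzero X ∈ ℝ^{d×n}, the normalized linear score g(X) = Qᵀ X / (‖Q‖_F · ‖Xᵀ‖_{(∞,2)}) ∈ ℝ^{m×n} and the attention map Att(X) = X · softmax(g(X))ᵀ ∈ ℝ^{d×m}. Then Att is Lipschitz continuous with constant e¹√(m/n) + √8 with respect to the Frobenius norm: for all nonzero X, Y ∈ ℝ^{d×n}, ‖Att(X) − Att(Y)‖_F ≤ (e√(m/n) + √8) ‖X − Y‖_F. -/

import Mathlib

open scoped BigOperators Matrix

/-- Frobenius norm of a real matrix. -/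
noncomputable def frobNorm {α β : Type*} [Fintype α] [Fintype β] (M : Matrix α β ℝ) : ℝ :=
  Real.sqrt (∑ i, ∑ j, (M i j) ^ 2)

/-- Row-wise softmax of a real matrix. -/
noncomputable def softmaxM {α β : Type*} [Fintype α] [Fintype β] (M : Matrix α β ℝ) :
    Matrix α β ℝ :=
  Matrix.of fun i j => Real.exp (M i j) / ∑ k, Real.exp (M i k)

/-- The `(∞,2)`-norm of a matrix: the maximum Euclidean norm of its rows. -/
noncomputable def normInf2 {α β : Type*} [Fintype α] [Fintype β] (M : Matrix α β ℝ) : ℝ :=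
  ⨆ i, Real.sqrt (∑ j, (M i j) ^ 2)

/-- The `(2,∞)`-norm of a matrix: the ℓ2 norm of the vector of row-wise maxima (in abs. value). -/
noncomputable def norm2Inf {α β : Type*} [Fintype α] [Fintype β] (M : Matrix α β ℝ) : ℝ :=
  Real.sqrt (∑ i, (⨆ j, |M i j|) ^ 2)

open Finset

noncomputable def l2 {β : Type*} [Fintype β] (f : β → ℝ) : ℝ := Real.sqrt (∑ j, f j ^ 2)

lemma l2_nonneg {β : Type*} [Fintype β] (f : β → ℝ) : 0 ≤ l2 f := Real.sqrt_nonneg _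

lemma l2_eq_norm {β : Type*} [Fintype β] (f : β → ℝ) :
    l2 f = ‖(WithLp.equiv 2 (β → ℝ)).symm f‖ := by
  rw [EuclideanSpace.norm_eq]
  simp [l2, Real.norm_eq_abs, sq_abs]

lemma l2_add_le {β : Type*} [Fintype β] (f g : β → ℝ) :
    l2 (fun j => f j + g j) ≤ l2 f + l2 g := by
  rw [l2_eq_norm, l2_eq_norm, l2_eq_norm]
  exact norm_add_le ((WithLp.equiv 2 (β → ℝ)).symm f) ((WithLp.equiv 2 (β → ℝ)).symm g)

lemma abs_sum_mul_le_l2 {β : Type*} [Fintype β] (f g : β → ℝ) :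
    |∑ j, f j * g j| ≤ l2 f * l2 g := by
  calc |∑ j, f j * g j| ≤ ∑ j, |f j * g j| := Finset.abs_sum_le_sum_abs _ _
    _ = ∑ j, |f j| * |g j| := by simp [abs_mul]
    _ ≤ Real.sqrt (∑ j, |f j| ^ 2) * Real.sqrt (∑ j, |g j| ^ 2) :=
        Real.sum_mul_le_sqrt_mul_sqrt _ _ _
    _ = l2 f * l2 g := by simp [l2, sq_abs]

lemma l2_sum_smul_le {β γ : Type*} [Fintype β] [Fintype γ] (w : β → ℝ) (Y : γ → β → ℝ) :
    l2 (fun k => ∑ j, w j * Y k j) ≤ ∑ j, |w j| * l2 (fun k => Y k j) := by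
  have key : (WithLp.equiv 2 (γ → ℝ)).symm (fun k => ∑ j, w j * Y k j)
      = ∑ j, w j • (WithLp.equiv 2 (γ → ℝ)).symm (fun k => Y k j) := by
    ext k
    rw [WithLp.ofLp_sum, Finset.sum_apply]
    simp [smul_eq_mul]
  rw [l2_eq_norm, key]
  calc ‖∑ j, w j • (WithLp.equiv 2 (γ → ℝ)).symm (fun k => Y k j)‖
      ≤ ∑ j, ‖w j • (WithLp.equiv 2 (γ → ℝ)).symm (fun k => Y k j)‖ := norm_sum_le _ _
    _ = ∑ j, |w j| * l2 (fun k => Y k j) := by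
        refine Finset.sum_congr rfl fun j _ => ?_
        rw [norm_smul, Real.norm_eq_abs, l2_eq_norm]

lemma softmax_l1_lipschitz {β : Type*} [Fintype β] [Nonempty β] (u v : β → ℝ) (δ : ℝ)
    (hδ : ∀ j, |u j - v j| ≤ δ) :
    ∑ j, |Real.exp (u j) / (∑ k, Real.exp (u k)) - Real.exp (v j) / (∑ k, Real.exp (v k))| ≤ δ := by
  classical
  have hδ0 : 0 ≤ δ := le_trans (abs_nonneg _) (hδ (Classical.arbitrary β))
  set w : β → ℝ := fun j => u j - v j with hw
  set F : Finset β → ℝ → ℝ := fun s t => ∑ j ∈ s, Real.exp (v j + t * w j) with hF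
  set F' : Finset β → ℝ → ℝ := fun s t => ∑ j ∈ s, Real.exp (v j + t * w j) * w j with hF'
  have hderiv : ∀ (s : Finset β) (t : ℝ), HasDerivAt (F s) (F' s t) t := by
    intro s t
    exact HasDerivAt.fun_sum fun j _ =>
      (((hasDerivAt_mul_const (w j)).const_add (v j)).exp)
  have hFpos : ∀ t, 0 < F univ t := fun t =>
    Finset.sum_pos (fun j _ => Real.exp_pos _) univ_nonempty
  have hFnn : ∀ s t, 0 ≤ F s t := fun s t =>
    Finset.sum_nonneg fun j _ => (Real.exp_pos _).le
  have hF'bound : ∀ s t, |F' s t| ≤ δ * F s t := by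
    intro s t
    calc |F' s t| ≤ ∑ j ∈ s, |Real.exp (v j + t * w j) * w j| := Finset.abs_sum_le_sum_abs _ _
      _ ≤ ∑ j ∈ s, Real.exp (v j + t * w j) * δ := by
          refine Finset.sum_le_sum fun j _ => ?_
          rw [abs_mul, abs_of_pos (Real.exp_pos _)]
          exact mul_le_mul_of_nonneg_left (hδ j) (Real.exp_pos _).le
      _ = δ * F s t := by rw [hF]; rw [← Finset.sum_mul]; ring
  set Zu : ℝ := ∑ k, Real.exp (u k) with hZu
  set Zv : ℝ := ∑ k, Real.exp (v k) with hZv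
  have hZu0 : 0 < Zu := Finset.sum_pos (fun j _ => Real.exp_pos _) univ_nonempty
  have hZv0 : 0 < Zv := Finset.sum_pos (fun j _ => Real.exp_pos _) univ_nonempty
  set p : β → ℝ := fun j => Real.exp (u j) / Zu with hp
  set q : β → ℝ := fun j => Real.exp (v j) / Zv with hq
  set A : Finset β := univ.filter (fun j => q j ≤ p j) with hA
  set g : ℝ → ℝ := fun t => F A t / F univ t with hg
  -- derivative bound for g
  have hgderiv : ∀ t : ℝ, HasDerivAt g
      ((F' A t * F univ t - F A t * F' univ t) / (F univ t) ^ 2) t := by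
    intro t
    exact (hderiv A t).div (hderiv univ t) (hFpos t).ne'
  have hgbound : ∀ t : ℝ, |(F' A t * F univ t - F A t * F' univ t) / (F univ t) ^ 2| ≤ δ / 2 := by
    intro t
    have hsplit : F univ t = F A t + F Aᶜ t := (Finset.sum_add_sum_compl A _).symm
    have hsplit' : F' univ t = F' A t + F' Aᶜ t := (Finset.sum_add_sum_compl A _).symm
    have hnum : F' A t * F univ t - F A t * F' univ t
        = F' A t * F Aᶜ t - F A t * F' Aᶜ t := by rw [hsplit, hsplit']; ring
    have h1 : |F' A t * F Aᶜ t - F A t * F' Aᶜ t| ≤ 2 * δ * (F A t * F Aᶜ t) := by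
      have b1 := hF'bound A t
      have b2 := hF'bound Aᶜ t
      have n1 := hFnn A t
      have n2 := hFnn Aᶜ t
      have a1 := abs_nonneg (F' A t)
      have a2 := abs_nonneg (F' Aᶜ t)
      calc |F' A t * F Aᶜ t - F A t * F' Aᶜ t|
          ≤ |F' A t * F Aᶜ t| + |F A t * F' Aᶜ t| := abs_sub _ _
        _ = |F' A t| * F Aᶜ t + F A t * |F' Aᶜ t| := by
            rw [abs_mul, abs_mul, abs_of_nonneg n1, abs_of_nonneg n2]
        _ ≤ (δ * F A t) * F Aᶜ t + F A t * (δ * F Aᶜ t) :=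
            add_le_add (mul_le_mul_of_nonneg_right b1 n2) (mul_le_mul_of_nonneg_left b2 n1)
        _ = 2 * δ * (F A t * F Aᶜ t) := by ring
    have h2 : F A t * F Aᶜ t ≤ (F univ t) ^ 2 / 4 := by
      rw [hsplit]; nlinarith [sq_nonneg (F A t - F Aᶜ t)]
    rw [abs_div, abs_of_nonneg (sq_nonneg (F univ t)), hnum]
    rw [div_le_iff₀ (by positivity)]
    calc |F' A t * F Aᶜ t - F A t * F' Aᶜ t| ≤ 2 * δ * (F A t * F Aᶜ t) := h1
      _ ≤ 2 * δ * ((F univ t) ^ 2 / 4) := by gcongr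
      _ = δ / 2 * (F univ t) ^ 2 := by ring
  have hmvt : |g 1 - g 0| ≤ δ / 2 := by
    have := norm_image_sub_le_of_norm_deriv_le_segment_01'
      (f := g) (f' := fun t => (F' A t * F univ t - F A t * F' univ t) / (F univ t) ^ 2)
      (C := δ / 2)
      (fun t _ => (hgderiv t).hasDerivWithinAt)
      (fun t _ => hgbound t)
    simpa [Real.norm_eq_abs] using this
  -- identify g 1 and g 0
  have hFu : ∀ s : Finset β, F s 1 = ∑ j ∈ s, Real.exp (u j) := by
    intro s; refine Finset.sum_congr rfl fun j _ => ?_; rw [hw]; ring_nf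
  have hFv : ∀ s : Finset β, F s 0 = ∑ j ∈ s, Real.exp (v j) := by
    intro s; refine Finset.sum_congr rfl fun j _ => ?_; norm_num
  have hg1 : g 1 = ∑ j ∈ A, p j := by
    rw [hg]; simp only [hFu]
    rw [hp, ← hZu, Finset.sum_div]
  have hg0 : g 0 = ∑ j ∈ A, q j := by
    rw [hg]; simp only [hFv]
    rw [hq, ← hZv, Finset.sum_div]
  -- sum of absolute differences
  have hpsum : ∑ j, p j = 1 := by
    rw [hp, ← Finset.sum_div, ← hZu, div_self hZu0.ne']
  have hqsum : ∑ j, q j = 1 := by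
    rw [hq, ← Finset.sum_div, ← hZv, div_self hZv0.ne']
  have hzero : ∑ j, (p j - q j) = 0 := by
    rw [Finset.sum_sub_distrib, hpsum, hqsum]; ring
  have hAc : ∑ j ∈ Aᶜ, (q j - p j) = ∑ j ∈ A, (p j - q j) := by
    have hs := Finset.sum_add_sum_compl A (fun j => p j - q j)
    rw [hzero] at hs
    have e : ∑ j ∈ Aᶜ, (q j - p j) = - ∑ j ∈ Aᶜ, (p j - q j) := by
      rw [← Finset.sum_neg_distrib]
      exact Finset.sum_congr rfl fun j _ => by ring
    rw [e]
    linarith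
  have habs : ∑ j, |p j - q j| = 2 * ∑ j ∈ A, (p j - q j) := by
    rw [← Finset.sum_add_sum_compl A (fun j => |p j - q j|)]
    have e1 : ∑ j ∈ A, |p j - q j| = ∑ j ∈ A, (p j - q j) := by
      refine Finset.sum_congr rfl fun j hj => ?_
      rw [hA, Finset.mem_filter] at hj
      exact abs_of_nonneg (by linarith [hj.2])
    have e2 : ∑ j ∈ Aᶜ, |p j - q j| = ∑ j ∈ Aᶜ, (q j - p j) := by
      refine Finset.sum_congr rfl fun j hj => ?_
      rw [hA, Finset.mem_compl, Finset.mem_filter] at hj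
      have : ¬ q j ≤ p j := fun hc => hj ⟨Finset.mem_univ j, hc⟩
      rw [abs_sub_comm]
      exact abs_of_nonneg (by linarith [lt_of_not_ge this])
    rw [e1, e2, hAc]; ring
  have final : ∑ j ∈ A, (p j - q j) ≤ δ / 2 := by
    have : g 1 - g 0 = ∑ j ∈ A, (p j - q j) := by
      rw [hg1, hg0, Finset.sum_sub_distrib]
    rw [← this]
    exact le_trans (le_abs_self _) hmvt
  calc ∑ j, |p j - q j| = 2 * ∑ j ∈ A, (p j - q j) := habs
    _ ≤ 2 * (δ / 2) := by linarith
    _ = δ := by ring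


/- matrix-level helpers -/

lemma frob_eq_l2 {α β : Type*} [Fintype α] [Fintype β] (M : Matrix α β ℝ) :
    frobNorm M = l2 (fun p : α × β => M p.1 p.2) := by
  rw [frobNorm, l2, Fintype.sum_prod_type]

lemma frob_nonneg {α β : Type*} [Fintype α] [Fintype β] (M : Matrix α β ℝ) : 0 ≤ frobNorm M :=
  Real.sqrt_nonneg _

lemma frob_add_le {α β : Type*} [Fintype α] [Fintype β] (A B : Matrix α β ℝ) :
    frobNorm (A + B) ≤ frobNorm A + frobNorm B := by
  rw [frob_eq_l2, frob_eq_l2, frob_eq_l2]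
  have : (fun p : α × β => (A + B) p.1 p.2) = fun p : α × β => A p.1 p.2 + B p.1 p.2 := rfl
  rw [this]
  exact l2_add_le _ _

lemma frob_neg {α β : Type*} [Fintype α] [Fintype β] (M : Matrix α β ℝ) :
    frobNorm (-M) = frobNorm M := by
  unfold frobNorm
  congr 1
  refine Finset.sum_congr rfl fun i _ => Finset.sum_congr rfl fun j _ => ?_
  simp [neg_sq]

lemma frob_pos {α β : Type*} [Fintype α] [Fintype β] {M : Matrix α β ℝ} (h : M ≠ 0) :
    0 < frobNorm M := by
  rw [frobNorm, Real.sqrt_pos]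
  rcases (lt_or_eq_of_le (Finset.sum_nonneg fun i _ =>
    Finset.sum_nonneg fun j _ => sq_nonneg (M i j))) with hlt | heq
  · exact hlt
  · exfalso
    apply h
    ext i j
    have h1 := (Finset.sum_eq_zero_iff_of_nonneg
      (fun i _ => Finset.sum_nonneg fun j _ => sq_nonneg (M i j))).1 heq.symm i (Finset.mem_univ i)
    have h2 := (Finset.sum_eq_zero_iff_of_nonneg (fun j _ => sq_nonneg (M i j))).1 h1 j
      (Finset.mem_univ j)
    simpa using pow_eq_zero_iff (n := 2) (by norm_num) |>.1 h2

lemma col_le_normInf2 {α β : Type*} [Fintype α] [Fintype β] (M : Matrix α β ℝ) (i : α) :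
    Real.sqrt (∑ j, M i j ^ 2) ≤ normInf2 M := by
  unfold normInf2
  exact le_ciSup (f := fun i => Real.sqrt (∑ j, M i j ^ 2))
    (Set.Finite.bddAbove (Set.finite_range _)) i

lemma normInf2_le {α β : Type*} [Fintype α] [Fintype β] [Nonempty α] {M : Matrix α β ℝ} {C : ℝ}
    (h : ∀ i, Real.sqrt (∑ j, M i j ^ 2) ≤ C) : normInf2 M ≤ C :=
  ciSup_le h

lemma normInf2_pos {α β : Type*} [Fintype α] [Fintype β] {M : Matrix α β ℝ} (h : M ≠ 0) :
    0 < normInf2 M := by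
  have : ∃ i j, M i j ≠ 0 := by
    by_contra hc
    push_neg at hc
    exact h (by ext i j; simpa using hc i j)
  obtain ⟨i, j, hij⟩ := this
  have h1 : 0 < Real.sqrt (∑ j, M i j ^ 2) := by
    rw [Real.sqrt_pos]
    exact Finset.sum_pos' (fun j _ => sq_nonneg _) ⟨j, Finset.mem_univ j, by positivity⟩
  exact lt_of_lt_of_le h1 (col_le_normInf2 M i)


set_option maxHeartbeats 1000000 in
lemma main_aux {d n m : ℕ}
    (Q : Matrix (Fin d) (Fin m) ℝ) (hQ : Q ≠ 0)
    (X Y : Matrix (Fin d) (Fin n) ℝ) (hX : X ≠ 0) (hY : Y ≠ 0)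
    (hN : normInf2 Yᵀ ≤ normInf2 Xᵀ) :
    frobNorm
        (X * (softmaxM ((frobNorm Q * normInf2 Xᵀ)⁻¹ • (Qᵀ * X)))ᵀ -
         Y * (softmaxM ((frobNorm Q * normInf2 Yᵀ)⁻¹ • (Qᵀ * Y)))ᵀ) ≤
      (Real.exp 1 * Real.sqrt ((m : ℝ) / n) + Real.sqrt 8) * frobNorm (X - Y) := by
  -- nonemptiness
  have hn : Nonempty (Fin n) := by
    rcases Nat.eq_zero_or_pos n with h | h
    · exact absurd (by subst h; ext i j; exact j.elim0 : X = 0) hX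
    · exact ⟨⟨0, h⟩⟩
  have hd : Nonempty (Fin d) := by
    rcases Nat.eq_zero_or_pos d with h | h
    · exact absurd (by subst h; ext i j; exact i.elim0 : X = 0) hX
    · exact ⟨⟨0, h⟩⟩
  have hm : Nonempty (Fin m) := by
    rcases Nat.eq_zero_or_pos m with h | h
    · exact absurd (by subst h; ext i j; exact j.elim0 : Q = 0) hQ
    · exact ⟨⟨0, h⟩⟩
  -- basic quantities
  set nQ : ℝ := frobNorm Q with hnQdef
  set NX : ℝ := normInf2 Xᵀ with hNXdef
  set NY : ℝ := normInf2 Yᵀ with hNYdef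
  set D : ℝ := normInf2 (X - Y)ᵀ with hDdef
  have hnQ : 0 < nQ := frob_pos hQ
  have hNX : 0 < NX := normInf2_pos (fun h => hX (by simpa using congrArg Matrix.transpose h))
  have hNY : 0 < NY := normInf2_pos (fun h => hY (by simpa using congrArg Matrix.transpose h))
  have hD0 : 0 ≤ D := by
    refine le_trans ?_ (col_le_normInf2 _ (Classical.arbitrary (Fin n)))
    positivity
  set qn : Fin m → ℝ := fun i => l2 (fun k => Q k i) with hqndef
  have hqn_nonneg : ∀ i, 0 ≤ qn i := fun i => l2_nonneg _
  have hQsum : ∑ i, qn i ^ 2 = nQ ^ 2 := by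
    have h1 : ∀ i, qn i ^ 2 = ∑ k, Q k i ^ 2 := by
      intro i
      rw [hqndef]
      exact Real.sq_sqrt (Finset.sum_nonneg fun k _ => sq_nonneg _)
    have h2 : nQ ^ 2 = ∑ k, ∑ i, Q k i ^ 2 := by
      rw [hnQdef, frobNorm]
      exact Real.sq_sqrt (Finset.sum_nonneg fun k _ => Finset.sum_nonneg fun i _ => sq_nonneg _)
    simp_rw [h1, h2]
    exact Finset.sum_comm
  have hqn_le : ∀ i, qn i ≤ nQ := by
    intro i
    have h1 : qn i ^ 2 ≤ nQ ^ 2 := by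
      rw [← hQsum]
      exact Finset.single_le_sum (fun i _ => sq_nonneg (qn i)) (Finset.mem_univ i)
    nlinarith [hqn_nonneg i, hnQ]
  -- column norms
  have hcolX : ∀ j, l2 (fun k => X k j) ≤ NX := by
    intro j
    have := col_le_normInf2 Xᵀ j
    simpa [l2, Matrix.transpose_apply] using this
  have hcolY : ∀ j, l2 (fun k => Y k j) ≤ NY := by
    intro j
    have := col_le_normInf2 Yᵀ j
    simpa [l2, Matrix.transpose_apply] using this
  have hcolD : ∀ j, l2 (fun k => X k j - Y k j) ≤ D := by
    intro j
    have := col_le_normInf2 (X - Y)ᵀ j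
    simpa [l2, Matrix.transpose_apply, Matrix.sub_apply, hDdef] using this
  have hD_frob : D ≤ frobNorm (X - Y) := by
    rw [hDdef]
    refine normInf2_le fun j => ?_
    have h : ∑ k, (X - Y)ᵀ j k ^ 2 ≤ ∑ i, ∑ j', (X - Y) i j' ^ 2 := by
      calc ∑ k, (X - Y)ᵀ j k ^ 2 = ∑ k, (X - Y) k j ^ 2 := rfl
        _ ≤ ∑ k, ∑ j', (X - Y) k j' ^ 2 := by
            refine Finset.sum_le_sum fun k _ => ?_
            exact Finset.single_le_sum (f := fun j' => (X - Y) k j' ^ 2)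
              (fun j' _ => sq_nonneg _) (Finset.mem_univ j)
    exact Real.sqrt_le_sqrt h
  have hNXY : NX - NY ≤ D := by
    have h1 : NX ≤ NY + D := by
      rw [hNXdef]
      refine normInf2_le fun j => ?_
      have e : (fun k => Xᵀ j k) = fun k => Y k j + (X k j - Y k j) := by
        funext k; simp [Matrix.transpose_apply]
      calc Real.sqrt (∑ k, Xᵀ j k ^ 2) = l2 (fun k => Xᵀ j k) := rfl
        _ = l2 (fun k => Y k j + (X k j - Y k j)) := by rw [e]
        _ ≤ l2 (fun k => Y k j) + l2 (fun k => X k j - Y k j) := l2_add_le _ _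
        _ ≤ NY + D := add_le_add (hcolY j) (hcolD j)
    linarith
  -- score matrices
  set gX : Matrix (Fin m) (Fin n) ℝ := (nQ * NX)⁻¹ • (Qᵀ * X) with hgXdef
  set gY : Matrix (Fin m) (Fin n) ℝ := (nQ * NY)⁻¹ • (Qᵀ * Y) with hgYdef
  have hgXe : ∀ i j, gX i j = (nQ * NX)⁻¹ * ∑ k, Q k i * X k j := by
    intro i j
    simp [hgXdef, Matrix.smul_apply, Matrix.mul_apply, Matrix.transpose_apply, smul_eq_mul]
  have hgYe : ∀ i j, gY i j = (nQ * NY)⁻¹ * ∑ k, Q k i * Y k j := by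
    intro i j
    simp [hgYdef, Matrix.smul_apply, Matrix.mul_apply, Matrix.transpose_apply, smul_eq_mul]
  have hgX1 : ∀ i j, |gX i j| ≤ 1 := by
    intro i j
    rw [hgXe i j, abs_mul, abs_inv, abs_of_pos (by positivity)]
    rw [inv_mul_le_iff₀ (by positivity), mul_one]
    calc |∑ k, Q k i * X k j| ≤ qn i * l2 (fun k => X k j) := abs_sum_mul_le_l2 _ _
      _ ≤ nQ * NX := mul_le_mul (hqn_le i) (hcolX j) (l2_nonneg _) hnQ.le
  have hgY1 : ∀ i j, |gY i j| ≤ 1 := by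
    intro i j
    rw [hgYe i j, abs_mul, abs_inv, abs_of_pos (by positivity)]
    rw [inv_mul_le_iff₀ (by positivity), mul_one]
    calc |∑ k, Q k i * Y k j| ≤ qn i * l2 (fun k => Y k j) := abs_sum_mul_le_l2 _ _
      _ ≤ nQ * NY := mul_le_mul (hqn_le i) (hcolY j) (l2_nonneg _) hnQ.le
  set P : Matrix (Fin m) (Fin n) ℝ := softmaxM gX with hPdef
  set R : Matrix (Fin m) (Fin n) ℝ := softmaxM gY with hRdef
  have hPe : ∀ i j, P i j = Real.exp (gX i j) / ∑ k, Real.exp (gX i k) := fun i j => rfl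
  have hRe : ∀ i j, R i j = Real.exp (gY i j) / ∑ k, Real.exp (gY i k) := fun i j => rfl
  have hPnn : ∀ i j, 0 ≤ P i j := by
    intro i j
    rw [hPe]
    positivity
  have hPsum : ∀ i, ∑ j, P i j = 1 := by
    intro i
    simp_rw [hPe, ← Finset.sum_div]
    exact div_self (ne_of_gt (Finset.sum_pos (fun k _ => Real.exp_pos _) Finset.univ_nonempty))
  have hPle : ∀ i j, P i j ≤ Real.exp 1 ^ 2 / n := by
    intro i j
    rw [hPe]
    have hnum : Real.exp (gX i j) ≤ Real.exp 1 :=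
      Real.exp_le_exp.2 (le_trans (le_abs_self _) (hgX1 i j))
    have hden : (n : ℝ) * Real.exp (-1) ≤ ∑ k, Real.exp (gX i k) := by
      calc (n : ℝ) * Real.exp (-1) = ∑ _k : Fin n, Real.exp (-1) := by
            simp [Finset.sum_const, Finset.card_univ, mul_comm]
        _ ≤ ∑ k, Real.exp (gX i k) := by
            refine Finset.sum_le_sum fun k _ => Real.exp_le_exp.2 ?_
            have := hgX1 i k
            rw [abs_le] at this
            linarith [this.1]
    have hnpos : (0:ℝ) < n := by
      have : 0 < n := Fin.pos_iff_nonempty.2 hn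
      exact_mod_cast this
    calc Real.exp (gX i j) / ∑ k, Real.exp (gX i k)
        ≤ Real.exp 1 / ((n : ℝ) * Real.exp (-1)) :=
          div_le_div₀ (Real.exp_pos 1).le hnum (by positivity) hden
      _ = Real.exp 1 ^ 2 / n := by
          rw [Real.exp_neg, sq]
          field_simp
  -- row-difference bound for scores
  have hrow : ∀ i j, |gX i j - gY i j| ≤ 2 * qn i * D / (nQ * NX) := by
    intro i j
    have hst : gX i j - gY i j
        = (nQ * NX)⁻¹ * (∑ k, Q k i * (X k j - Y k j))
          + ((nQ * NX)⁻¹ - (nQ * NY)⁻¹) * (∑ k, Q k i * Y k j) := by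
      rw [hgXe, hgYe]
      have : ∑ k, Q k i * (X k j - Y k j) = (∑ k, Q k i * X k j) - ∑ k, Q k i * Y k j := by
        rw [← Finset.sum_sub_distrib]
        exact Finset.sum_congr rfl fun k _ => by ring
      rw [this]
      ring
    have h1 : |(nQ * NX)⁻¹ * (∑ k, Q k i * (X k j - Y k j))| ≤ qn i * D / (nQ * NX) := by
      rw [abs_mul, abs_inv, abs_of_pos (by positivity : (0:ℝ) < nQ * NX)]
      rw [inv_mul_le_iff₀ (by positivity)]
      calc |∑ k, Q k i * (X k j - Y k j)|
          ≤ qn i * l2 (fun k => X k j - Y k j) := abs_sum_mul_le_l2 _ _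
        _ ≤ qn i * D := mul_le_mul_of_nonneg_left (hcolD j) (hqn_nonneg i)
        _ = nQ * NX * (qn i * D / (nQ * NX)) := by field_simp
    have h2 : |((nQ * NX)⁻¹ - (nQ * NY)⁻¹) * (∑ k, Q k i * Y k j)| ≤ qn i * D / (nQ * NX) := by
      have hc : (nQ * NX)⁻¹ - (nQ * NY)⁻¹ = (NY - NX) / (nQ * NX * NY) := by
        field_simp
      have habsnum : |NY - NX| ≤ D := by
        rw [abs_of_nonpos (by linarith)]
        linarith
      have ht : |∑ k, Q k i * Y k j| ≤ qn i * NY :=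
        (abs_sum_mul_le_l2 _ _).trans (mul_le_mul_of_nonneg_left (hcolY j) (hqn_nonneg i))
      rw [abs_mul, hc, abs_div, abs_of_pos (show (0:ℝ) < nQ * NX * NY by positivity)]
      calc |NY - NX| / (nQ * NX * NY) * |∑ k, Q k i * Y k j|
          ≤ D / (nQ * NX * NY) * (qn i * NY) := by gcongr
        _ = qn i * D / (nQ * NX) := by
            field_simp
    calc |gX i j - gY i j|
        ≤ |(nQ * NX)⁻¹ * (∑ k, Q k i * (X k j - Y k j))|
          + |((nQ * NX)⁻¹ - (nQ * NY)⁻¹) * (∑ k, Q k i * Y k j)| := by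
          rw [hst]; exact abs_add_le _ _
      _ ≤ qn i * D / (nQ * NX) + qn i * D / (nQ * NX) := add_le_add h1 h2
      _ = 2 * qn i * D / (nQ * NX) := by ring
  -- ℓ1 bound on rows of P - R
  have hl1 : ∀ i, ∑ j, |P i j - R i j| ≤ 2 * qn i * D / (nQ * NX) := by
    intro i
    have := softmax_l1_lipschitz (fun j => gX i j) (fun j => gY i j)
      (2 * qn i * D / (nQ * NX)) (hrow i)
    simpa [hPe, hRe] using this
  set f := frobNorm (X - Y) with hfdef
  have hf0 : 0 ≤ f := frob_nonneg _
  have hfsq : f ^ 2 = ∑ k, ∑ j, (X - Y) k j ^ 2 :=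
    Real.sq_sqrt (Finset.sum_nonneg fun k _ => Finset.sum_nonneg fun j _ => sq_nonneg _)
  -- Term 1
  have hT1 : frobNorm ((X - Y) * Pᵀ) ≤ Real.exp 1 * Real.sqrt ((m:ℝ)/n) * f := by
    have hentry : ∀ k i, ((X - Y) * Pᵀ) k i = ∑ j, (X - Y) k j * P i j := by
      intro k i
      rw [Matrix.mul_apply]
      exact Finset.sum_congr rfl fun j _ => by rw [Matrix.transpose_apply]
    have hsq : ∀ k i, ((X - Y) * Pᵀ) k i ^ 2 ≤ ∑ j, P i j * (X - Y) k j ^ 2 := by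
      intro k i
      rw [hentry]
      have cs := Finset.sum_mul_sq_le_sq_mul_sq Finset.univ
        (fun j => Real.sqrt (P i j)) (fun j => Real.sqrt (P i j) * (X - Y) k j)
      calc (∑ j, (X - Y) k j * P i j) ^ 2
          = (∑ j, Real.sqrt (P i j) * (Real.sqrt (P i j) * (X - Y) k j)) ^ 2 := by
            congr 1
            refine Finset.sum_congr rfl fun j _ => ?_
            rw [← mul_assoc, Real.mul_self_sqrt (hPnn i j)]
            ring
        _ ≤ (∑ j, Real.sqrt (P i j) ^ 2) * ∑ j, (Real.sqrt (P i j) * (X - Y) k j) ^ 2 := cs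
        _ = (∑ j, P i j) * ∑ j, P i j * (X - Y) k j ^ 2 := by
            congr 1
            · exact Finset.sum_congr rfl fun j _ => Real.sq_sqrt (hPnn i j)
            · refine Finset.sum_congr rfl fun j _ => ?_
              rw [mul_pow, Real.sq_sqrt (hPnn i j)]
        _ = ∑ j, P i j * (X - Y) k j ^ 2 := by rw [hPsum i, one_mul]
    have hSsum : ∑ k, ∑ i, ((X - Y) * Pᵀ) k i ^ 2
        ≤ Real.exp 1 ^ 2 * ((m:ℝ)/n) * ∑ k, ∑ j, (X - Y) k j ^ 2 := by
      calc ∑ k, ∑ i, ((X - Y) * Pᵀ) k i ^ 2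
          ≤ ∑ k, ∑ i, ∑ j, P i j * (X - Y) k j ^ 2 :=
            Finset.sum_le_sum fun k _ => Finset.sum_le_sum fun i _ => hsq k i
        _ = ∑ i, ∑ j, P i j * (∑ k, (X - Y) k j ^ 2) := by
            rw [Finset.sum_comm]
            refine Finset.sum_congr rfl fun i _ => ?_
            rw [Finset.sum_comm]
            exact Finset.sum_congr rfl fun j _ => by rw [← Finset.mul_sum]
        _ ≤ ∑ _i : Fin m, ∑ j, (Real.exp 1 ^ 2 / n) * (∑ k, (X - Y) k j ^ 2) := by
            refine Finset.sum_le_sum fun i _ => Finset.sum_le_sum fun j _ => ?_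
            exact mul_le_mul_of_nonneg_right (hPle i j)
              (Finset.sum_nonneg fun k _ => sq_nonneg _)
        _ = (m : ℝ) * ∑ j, (Real.exp 1 ^ 2 / n) * (∑ k, (X - Y) k j ^ 2) := by
            rw [Finset.sum_const, Finset.card_univ, Fintype.card_fin, nsmul_eq_mul]
        _ = Real.exp 1 ^ 2 * ((m:ℝ)/n) * ∑ j, ∑ k, (X - Y) k j ^ 2 := by
            rw [Finset.mul_sum, Finset.mul_sum]
            exact Finset.sum_congr rfl fun j _ => by ring
        _ = Real.exp 1 ^ 2 * ((m:ℝ)/n) * ∑ k, ∑ j, (X - Y) k j ^ 2 := by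
            rw [Finset.sum_comm]
    have hC0 : 0 ≤ Real.exp 1 * Real.sqrt ((m:ℝ)/n) * f :=
      mul_nonneg (mul_nonneg (Real.exp_pos 1).le (Real.sqrt_nonneg _)) hf0
    calc frobNorm ((X - Y) * Pᵀ)
        ≤ Real.sqrt ((Real.exp 1 * Real.sqrt ((m:ℝ)/n) * f) ^ 2) := by
          apply Real.sqrt_le_sqrt
          have he : (Real.exp 1 * Real.sqrt ((m:ℝ)/n) * f) ^ 2
              = Real.exp 1 ^ 2 * ((m:ℝ)/n) * f ^ 2 := by
            rw [mul_pow, mul_pow, Real.sq_sqrt (by positivity)]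
          rw [he, hfsq]
          exact hSsum
      _ = Real.exp 1 * Real.sqrt ((m:ℝ)/n) * f := Real.sqrt_sq hC0
  -- Term 2
  have hT2 : frobNorm (Y * (P - R)ᵀ) ≤ 2 * D := by
    have hentry : ∀ k i, (Y * (P - R)ᵀ) k i = ∑ j, (P i j - R i j) * Y k j := by
      intro k i
      rw [Matrix.mul_apply]
      refine Finset.sum_congr rfl fun j _ => ?_
      rw [Matrix.transpose_apply, Matrix.sub_apply]
      ring
    have hrowbound : ∀ i, ∑ k, (∑ j, (P i j - R i j) * Y k j) ^ 2
        ≤ (NY * (2 * qn i * D / (nQ * NX))) ^ 2 := by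
      intro i
      have h1 : l2 (fun k => ∑ j, (P i j - R i j) * Y k j)
          ≤ ∑ j, |P i j - R i j| * l2 (fun k => Y k j) := l2_sum_smul_le _ _
      have h2 : ∑ j, |P i j - R i j| * l2 (fun k => Y k j)
          ≤ ∑ j, |P i j - R i j| * NY :=
        Finset.sum_le_sum fun j _ => mul_le_mul_of_nonneg_left (hcolY j) (abs_nonneg _)
      have h3 : ∑ j, |P i j - R i j| * NY ≤ (2 * qn i * D / (nQ * NX)) * NY := by
        rw [← Finset.sum_mul]
        exact mul_le_mul_of_nonneg_right (hl1 i) hNY.le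
      have hl2b : l2 (fun k => ∑ j, (P i j - R i j) * Y k j)
          ≤ NY * (2 * qn i * D / (nQ * NX)) := by
        refine (h1.trans (h2.trans h3)).trans_eq ?_
        ring
      have he : ∑ k, (∑ j, (P i j - R i j) * Y k j) ^ 2
          = l2 (fun k => ∑ j, (P i j - R i j) * Y k j) ^ 2 :=
        (Real.sq_sqrt (Finset.sum_nonneg fun k _ => sq_nonneg _)).symm
      rw [he]
      exact pow_le_pow_left₀ (l2_nonneg _) hl2b 2
    have hsum : ∑ k, ∑ i, (Y * (P - R)ᵀ) k i ^ 2 ≤ (2 * D) ^ 2 := by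
      calc ∑ k, ∑ i, (Y * (P - R)ᵀ) k i ^ 2
          = ∑ i, ∑ k, (∑ j, (P i j - R i j) * Y k j) ^ 2 := by
            rw [Finset.sum_comm]
            exact Finset.sum_congr rfl fun i _ =>
              Finset.sum_congr rfl fun k _ => by rw [hentry]
        _ ≤ ∑ i, (NY * (2 * qn i * D / (nQ * NX))) ^ 2 :=
            Finset.sum_le_sum fun i _ => hrowbound i
        _ = (2 * NY * D / (nQ * NX)) ^ 2 * ∑ i, qn i ^ 2 := by
            rw [Finset.mul_sum]
            exact Finset.sum_congr rfl fun i _ => by ring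
        _ = (2 * NY * D / NX) ^ 2 := by
            rw [hQsum]
            field_simp
        _ ≤ (2 * D) ^ 2 := by
            rw [div_pow, div_le_iff₀ (pow_pos hNX 2)]
            have hsqle : NY ^ 2 ≤ NX ^ 2 := by nlinarith
            nlinarith [mul_nonneg (sq_nonneg (2 * D)) (sub_nonneg.2 hsqle), sq_nonneg D]
    calc frobNorm (Y * (P - R)ᵀ)
        ≤ Real.sqrt ((2 * D) ^ 2) := Real.sqrt_le_sqrt hsum
      _ = 2 * D := Real.sqrt_sq (by positivity)
  -- combine
  have hdecomp : X * Pᵀ - Y * Rᵀ = (X - Y) * Pᵀ + Y * (P - R)ᵀ := by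
    rw [Matrix.transpose_sub, Matrix.sub_mul, Matrix.mul_sub]
    abel
  have h8 : (2:ℝ) ≤ Real.sqrt 8 := by
    calc (2:ℝ) = Real.sqrt 4 := by
          rw [show (4:ℝ) = 2 ^ 2 by norm_num, Real.sqrt_sq (by norm_num : (0:ℝ) ≤ 2)]
      _ ≤ Real.sqrt 8 := Real.sqrt_le_sqrt (by norm_num)
  calc frobNorm (X * Pᵀ - Y * Rᵀ)
      = frobNorm ((X - Y) * Pᵀ + Y * (P - R)ᵀ) := by rw [hdecomp]
    _ ≤ frobNorm ((X - Y) * Pᵀ) + frobNorm (Y * (P - R)ᵀ) := frob_add_le _ _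
    _ ≤ Real.exp 1 * Real.sqrt ((m:ℝ)/n) * f + 2 * D := add_le_add hT1 hT2
    _ ≤ Real.exp 1 * Real.sqrt ((m:ℝ)/n) * f + Real.sqrt 8 * f := by
        have : 2 * D ≤ Real.sqrt 8 * f :=
          mul_le_mul h8 hD_frob hD0 (Real.sqrt_nonneg 8)
        linarith
    _ = (Real.exp 1 * Real.sqrt ((m:ℝ)/n) + Real.sqrt 8) * f := by ring

/-- **LipschitzNorm, linear score, α = 1.** Fix a nonzero query matrix
`Q ∈ ℝ^{d×m}` and, for nonzero `X`, set `g(X) = Qᵀ X / (‖Q‖_F ⬝ ‖Xᵀ‖_{(∞,2)})` and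
`Att(X) = X ⬝ softmax(g(X))ᵀ`.  Then for all nonzero `X, Y`,
`‖Att(X) − Att(Y)‖_F ≤ (e √(m/n) + √8) ‖X − Y‖_F`. -/
theorem attention_lipschitz_linear_score {d n m : ℕ}
    (Q : Matrix (Fin d) (Fin m) ℝ) (hQ : Q ≠ 0) :
    ∀ X Y : Matrix (Fin d) (Fin n) ℝ, X ≠ 0 → Y ≠ 0 →
      frobNorm
          (X * (softmaxM ((frobNorm Q * normInf2 Xᵀ)⁻¹ • (Qᵀ * X)))ᵀ -
           Y * (softmaxM ((frobNorm Q * normInf2 Yᵀ)⁻¹ • (Qᵀ * Y)))ᵀ) ≤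
        (Real.exp 1 * Real.sqrt ((m : ℝ) / n) + Real.sqrt 8) * frobNorm (X - Y) := by
  intro X Y hX hY
  rcases le_total (normInf2 Yᵀ) (normInf2 Xᵀ) with h | h
  · exact main_aux Q hQ X Y hX hY h
  · have hs := main_aux Q hQ Y X hY hX h
    set A := X * (softmaxM ((frobNorm Q * normInf2 Xᵀ)⁻¹ • (Qᵀ * X)))ᵀ with hA
    set B := Y * (softmaxM ((frobNorm Q * normInf2 Yᵀ)⁻¹ • (Qᵀ * Y)))ᵀ with hB
    calc frobNorm (A - B) = frobNorm (B - A) := by rw [← frob_neg (A - B), neg_sub]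
      _ ≤ (Real.exp 1 * Real.sqrt ((m : ℝ) / n) + Real.sqrt 8) * frobNorm (Y - X) := hs
      _ = (Real.exp 1 * Real.sqrt ((m : ℝ) / n) + Real.sqrt 8) * frobNorm (X - Y) := by
          rw [← frob_neg (Y - X), neg_sub]
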